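/- Let C be a category whose morphisms are monic, and let D be a full subcategory of C whose objects are cofinal in C (for every object X of C there is an object D of D with hom_C(X, D) ≠ ∅). If C has the Ramsey property for morphisms, then D has the Ramsey property for morphisms. -/

import Mathlib

open CategoryTheory

/-- The hom-version Ramsey arrow. -/
def homArrow {C : Type*} [Category C] (A B C0 : C) (k : Nat) : Prop :=
  Nonempty (A ⟶ B) ∧ Nonempty (B ⟶ C0) ∧
    ∀ χ : (A ⟶ C0) → Fin k, ∃ (i : Fin k) (w : B ⟶ C0),
      ∀ f : A ⟶ B, χ (f ≫ w) = i

/-- Ramsey property for morphisms. -/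
def RamseyMor (C : Type*) [Category C] : Prop :=
  ∀ k : Nat, 2 ≤ k → ∀ A B : C, Nonempty (A ⟶ B) →
    ∃ C0 : C, homArrow A B C0 k

/-- `f ∼_A f'` iff `f' = f ∘ α` for some automorphism `α` of `A`. -/
def subRel {C : Type*} [Category C] {A B : C} (f f' : A ⟶ B) : Prop :=
  ∃ α : A ≅ A, f' = α.hom ≫ f

/-- The object-version (subobject) Ramsey arrow. -/
def objArrow {C : Type*} [Category C] (A B C0 : C) (k : Nat) : Prop :=
  Nonempty (A ⟶ B) ∧ Nonempty (B ⟶ C0) ∧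
    ∀ χ : Quot (subRel (A := A) (B := C0)) → Fin k,
      ∃ (i : Fin k) (w : B ⟶ C0),
        ∀ f : A ⟶ B, χ (Quot.mk _ (f ≫ w)) = i

/-- Ramsey property for objects. -/
def RamseyObj (C : Type*) [Category C] : Prop :=
  ∀ k : Nat, 2 ≤ k → ∀ A B : C, Nonempty (A ⟶ B) →
    ∃ C0 : C, objArrow A B C0 k

theorem stmt4 {C : Type*} [Category C]
    (hmono : ∀ {X Y : C} (f : X ⟶ Y), Mono f)
    (P : C → Prop)
    (hcof : ∀ X : C, ∃ D0 : C, P D0 ∧ Nonempty (X ⟶ D0))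
    (hR : RamseyMor C) :
    RamseyMor (ObjectProperty.FullSubcategory P) := by
  intro k hk A B hAB
  obtain ⟨C0, ⟨hab⟩, ⟨hbc⟩, hcol⟩ := hR k hk A.obj B.obj ⟨hAB.some.hom⟩
  obtain ⟨D0, hD0, ⟨g⟩⟩ := hcof C0
  refine ⟨⟨D0, hD0⟩, ⟨ObjectProperty.homMk hab⟩, ⟨ObjectProperty.homMk (show B.obj ⟶ D0 from hbc ≫ g)⟩, ?_⟩
  intro χ
  obtain ⟨i, w, hw⟩ := hcol (fun f => χ (ObjectProperty.homMk (show A.obj ⟶ D0 from f ≫ g)))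
  exact ⟨i, ObjectProperty.homMk (show B.obj ⟶ D0 from w ≫ g), fun f => by rw [← hw f.hom]; congr 1; ext; simp⟩
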